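/- For f ∈ M, f is convex if and only if f is the pointwise minimum of a monotone increasing function and a monotone decreasing function from [0,1] to [0,1]. -/

import Mathlib

open unitInterval

instance : Fact ((0:ℝ) ≤ 1) := ⟨zero_le_one⟩

/-- Convolution of `f` and `g` with respect to `star` and `trg`:
`(f ∗_△ g)(x) = sup { f(y) △ g(z) : y ∗ z = x }`, with `sup ∅ = 0 = ⊥`. -/
noncomputable def conv (star trg : I → I → I) (f g : I → I) : I → I :=
  fun x => sSup {v : I | ∃ y z : I, star y z = x ∧ v = trg (f y) (g z)}

/-- α-cut. -/
def cut (f : I → I) (a : I) : Set I := {x : I | a ≤ f x}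

/-- strong α-cut. -/
def scut (f : I → I) (a : I) : Set I := {x : I | a < f x}

/-- Convexity of a function `[0,1] → [0,1]`. -/
def FnConvex (f : I → I) : Prop := ∀ x y z : I, x ≤ y → y ≤ z → min (f x) (f z) ≤ f y

/-- Normality: `sup f = 1`. -/
def FnNormal (f : I → I) : Prop := sSup (Set.range f) = 1

/-- t-norm: commutative, associative, monotone in each argument, unit `1`. -/
def IsTnorm (t : I → I → I) : Prop :=
  (∀ a b, t a b = t b a) ∧ (∀ a b c, t (t a b) c = t a (t b c)) ∧
  (∀ a b c : I, a ≤ b → t a c ≤ t b c) ∧ (∀ a b c : I, b ≤ c → t a b ≤ t a c) ∧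
  (∀ a, t a 1 = a)

noncomputable def fL (f : I → I) (x : I) : I := sSup (f '' Set.Iic x)
noncomputable def fR (f : I → I) (x : I) : I := sSup (f '' Set.Ici x)

/-- up-closure `↑A`. -/
def upC (A : Set I) : Set I := ⋃ x ∈ A, Set.Icc x 1
/-- down-closure `↓A`. -/
def downC (A : Set I) : Set I := ⋃ x ∈ A, Set.Icc 0 x

/-- `A ∧ B = {min a b : a ∈ A, b ∈ B}`. -/
def setMin (A B : Set I) : Set I := Set.image2 min A B
/-- `A ≼ B` iff `A ∧ B = A`. -/
def pre (A B : Set I) : Prop := setMin A B = A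

/-- convolution order `f ⊑ g` iff `f ∧_∧ g = f`. -/
noncomputable def convOrd (f g : I → I) : Prop :=
  conv (fun a b => min a b) (fun a b => min a b) f g = f

/-- `f⁺ = ⋃ {[0,a] : f monotone increasing on [0,a]}`. -/
def fplus (f : I → I) : Set I :=
  ⋃₀ {S : Set I | ∃ a : I, S = Set.Icc 0 a ∧ MonotoneOn f (Set.Icc 0 a)}

open scoped Classical in
/-- characteristic function of a subset of `[0,1]`. -/
noncomputable def char (A : Set I) : I → I := fun x => if x ∈ A then 1 else 0

/-- t-power: `tpow t x n = x ∗ ⋯ ∗ x` (`n+1` factors). -/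
def tpow (t : I → I → I) (x : I) : ℕ → I
  | 0 => x
  | n+1 => t x (tpow t x n)

/-- left-continuity in each argument. -/
def LeftCts (t : I → I → I) : Prop :=
  ∀ a b : I, ContinuousWithinAt (fun x => t a x) (Set.Iio b) b ∧
             ContinuousWithinAt (fun x => t x b) (Set.Iio a) a

/-- border continuity: `a △ 1⁻ = a △ 1`. -/
def BorderCts (t : I → I → I) : Prop := ∀ a : I, sSup ((t a) '' Set.Iio 1) = t a 1
theorem stmt6 (f : I → I) :
    FnConvex f ↔
      ∃ g h : I → I, Monotone g ∧ Antitone h ∧ f = fun x => min (g x) (h x) := by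
  constructor
  · intro hc
    refine ⟨fL f, fR f, ?_, ?_, ?_⟩
    · intro a b hab
      exact sSup_le_sSup (Set.image_mono (Set.Iic_subset_Iic.mpr hab))
    · intro a b hab
      exact sSup_le_sSup (Set.image_mono (Set.Ici_subset_Ici.mpr hab))
    · funext x
      apply le_antisymm
      · exact le_min (le_sSup ⟨x, le_refl x, rfl⟩) (le_sSup ⟨x, le_refl x, rfl⟩)
      · by_contra h
        push_neg at h
        have h1 : f x < fL f x := lt_of_lt_of_le h (min_le_left _ _)
        have h2 : f x < fR f x := lt_of_lt_of_le h (min_le_right _ _)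
        obtain ⟨v, ⟨y, hy, rfl⟩, hv⟩ : ∃ v ∈ f '' Set.Iic x, f x < v := by
          by_contra hh; push_neg at hh
          exact absurd (sSup_le hh) (not_le.mpr h1)
        obtain ⟨w, ⟨z, hz, rfl⟩, hw⟩ : ∃ w ∈ f '' Set.Ici x, f x < w := by
          by_contra hh; push_neg at hh
          exact absurd (sSup_le hh) (not_le.mpr h2)
        exact absurd (hc y x z hy hz) (not_le.mpr (lt_min hv hw))
  · rintro ⟨g, h, hg, hh, rfl⟩
    intro x y z hxy hyz
    calc min (min (g x) (h x)) (min (g z) (h z))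
        ≤ min (g x) (h z) := min_le_min (min_le_left _ _) (min_le_right _ _)
      _ ≤ min (g y) (h y) := min_le_min (hg hxy) (hh hyz)
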